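/- For the nonlinear exponential Hawkes process with inhibition, the integral of the realized intensity max(λ*, 0) over (T_k, T_{k+1}) equals m(T_{k+1} - T_k*) + b^{-1}(c - m)(e^{-b(T_k* - T_k)} - e^{-b(T_{k+1} - T_k)}), where T_k* is the restart time. -/

import Mathlib

private lemma integA (m b c Tk : ℝ) (hb : 0 < b) (a d : ℝ) :
    ∫ t in a..d, (m + Real.exp (-b * (t - Tk)) * (c - m)) =
      m * (d - a) + b⁻¹ * (c - m) * (Real.exp (-b * (a - Tk)) - Real.exp (-b * (d - Tk))) := by
  have hderiv : ∀ t : ℝ, HasDerivAt (fun t => m * t - b⁻¹ * ((c - m) * Real.exp (-b * (t - Tk))))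
      (m + Real.exp (-b * (t - Tk)) * (c - m)) t := by
    intro t
    have h1 : HasDerivAt (fun t : ℝ => -b * (t - Tk)) (-b) t := by
      simpa using ((hasDerivAt_id t).sub_const Tk).const_mul (-b)
    have h2 := (h1.exp.const_mul (c - m)).const_mul b⁻¹
    have h4 := (hasDerivAt_id t).const_mul m
    have h5 := h4.sub h2
    refine HasDerivAt.congr_deriv h5 ?_
    field_simp [hb.ne']
    ring
  have hcont : Continuous fun t : ℝ => m + Real.exp (-b * (t - Tk)) * (c - m) := by continuity
  rw [intervalIntegral.integral_eq_sub_of_hasDerivAt (fun t _ => hderiv t)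
    (hcont.intervalIntegrable a d)]
  ring

private lemma signIff (m b c Tk : ℝ) (hm : 0 < m) (hb : 0 < b) (hc : c < 0) (t : ℝ) :
    t ≤ Tk + b⁻¹ * Real.log ((m - c) / m) ↔ m + Real.exp (-b * (t - Tk)) * (c - m) ≤ 0 := by
  have hmc : 0 < m - c := by linarith
  have hrat : 0 < (m - c) / m := by positivity
  set E := Real.exp (-b * (t - Tk)) with hEdef
  set B := Real.exp (b * (t - Tk)) with hBdef
  have hE : 0 < E := Real.exp_pos _
  have hB : 0 < B := Real.exp_pos _
  have h1 : t ≤ Tk + b⁻¹ * Real.log ((m - c) / m) ↔ b * (t - Tk) ≤ Real.log ((m - c) / m) := by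
    rw [← sub_le_iff_le_add', inv_mul_eq_div, le_div_iff₀ hb]
    constructor <;> intro h <;> nlinarith
  have h2 : B * E = 1 := by
    rw [hEdef, hBdef, ← Real.exp_add]; ring_nf; exact Real.exp_zero
  rw [h1, Real.le_log_iff_exp_le hrat, ← hBdef, le_div_iff₀ hm]
  constructor <;> intro h
  · have h4 := mul_le_mul_of_nonneg_right h hE.le
    have h5 : B * m * E = m := by rw [mul_comm B m, mul_assoc, h2, mul_one]
    nlinarith
  · have h4 := mul_le_mul_of_nonneg_right h hB.le
    nlinarith

private lemma signIff2 (m b c Tk : ℝ) (hm : 0 < m) (hb : 0 < b) (hc : c < 0) (t : ℝ) :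
    Tk + b⁻¹ * Real.log ((m - c) / m) ≤ t ↔ 0 ≤ m + Real.exp (-b * (t - Tk)) * (c - m) := by
  have hmc : 0 < m - c := by linarith
  have hrat : 0 < (m - c) / m := by positivity
  set E := Real.exp (-b * (t - Tk)) with hEdef
  set B := Real.exp (b * (t - Tk)) with hBdef
  have hE : 0 < E := Real.exp_pos _
  have hB : 0 < B := Real.exp_pos _
  have h1 : Tk + b⁻¹ * Real.log ((m - c) / m) ≤ t ↔ Real.log ((m - c) / m) ≤ b * (t - Tk) := by
    rw [← le_sub_iff_add_le', inv_mul_eq_div, div_le_iff₀ hb]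
    constructor <;> intro h <;> nlinarith
  have h2 : B * E = 1 := by
    rw [hEdef, hBdef, ← Real.exp_add]; ring_nf; exact Real.exp_zero
  rw [h1, Real.log_le_iff_le_exp hrat, ← hBdef, div_le_iff₀ hm]
  constructor <;> intro h
  · have h4 := mul_le_mul_of_nonneg_right h hE.le
    have h5 : B * m * E = m := by rw [mul_comm B m, mul_assoc, h2, mul_one]
    nlinarith
  · have h4 := mul_le_mul_of_nonneg_right h hB.le
    nlinarith

/-- Compensator increment for the nonlinear exponential Hawkes process: the
integral of the realized intensity `max(λ*, 0)` over an inter-event interval. -/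
theorem nonlinear_compensator_increment
    (m b c Tk Tk1 : ℝ) (hm : 0 < m) (hb : 0 < b) (hT : Tk < Tk1) :
    let Tstar : ℝ :=
      min (Tk + b⁻¹ * Real.log ((m - c) / m) * (if c < 0 then (1 : ℝ) else 0)) Tk1
    ∫ t in Tk..Tk1, max (m + Real.exp (-b * (t - Tk)) * (c - m)) 0 =
      m * (Tk1 - Tstar) +
        b⁻¹ * (c - m) * (Real.exp (-b * (Tstar - Tk)) - Real.exp (-b * (Tk1 - Tk))) := by
  intro Tstar
  have hcontf : Continuous fun t : ℝ => m + Real.exp (-b * (t - Tk)) * (c - m) := by continuity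
  have hcont : Continuous fun t : ℝ => max (m + Real.exp (-b * (t - Tk)) * (c - m)) 0 :=
    hcontf.max continuous_const
  by_cases hc : c < 0
  · -- inhibition case
    set s : ℝ := Tk + b⁻¹ * Real.log ((m - c) / m) with hsdef
    have hTstar : Tstar = min s Tk1 := by simp [Tstar, if_pos hc, hsdef]
    by_cases hs : Tk1 ≤ s
    · -- intensity negative on the whole interval
      have hTs2 : Tstar = Tk1 := by rw [hTstar, min_eq_right hs]
      rw [hTs2]
      rw [intervalIntegral.integral_congr (g := fun _ => (0 : ℝ))
        (fun t ht => by
          rw [Set.uIcc_of_le hT.le] at ht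
          exact max_eq_right ((signIff m b c Tk hm hb hc t).mp (le_trans ht.2 hs)))]
      simp
    · push_neg at hs
      have hTs2 : Tstar = s := by rw [hTstar, min_eq_left hs.le]
      rw [hTs2]
      have hks : Tk ≤ s := by
        have hlog : 0 < Real.log ((m - c) / m) :=
          Real.log_pos (by rw [lt_div_iff₀ hm]; linarith)
        have : 0 < b⁻¹ * Real.log ((m - c) / m) := by positivity
        rw [hsdef]; linarith
      rw [← intervalIntegral.integral_add_adjacent_intervals (b := s)
        (hcont.intervalIntegrable Tk s) (hcont.intervalIntegrable s Tk1)]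
      have hI1 : (∫ t in Tk..s, max (m + Real.exp (-b * (t - Tk)) * (c - m)) 0) = 0 := by
        rw [intervalIntegral.integral_congr (g := fun _ => (0 : ℝ))
          (fun t ht => by
            rw [Set.uIcc_of_le hks] at ht
            exact max_eq_right ((signIff m b c Tk hm hb hc t).mp ht.2))]
        simp
      have hI2 : (∫ t in s..Tk1, max (m + Real.exp (-b * (t - Tk)) * (c - m)) 0) =
          ∫ t in s..Tk1, (m + Real.exp (-b * (t - Tk)) * (c - m)) := by
        refine intervalIntegral.integral_congr (fun t ht => ?_)
        rw [Set.uIcc_of_le hs.le] at ht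
        exact max_eq_left ((signIff2 m b c Tk hm hb hc t).mp ht.1)
      rw [hI1, hI2, integA m b c Tk hb s Tk1, zero_add]
  · -- excitation case: intensity nonnegative everywhere
    push_neg at hc
    have hTs : Tstar = Tk := by simp [Tstar, if_neg (not_lt.mpr hc), min_eq_left hT.le]
    rw [hTs]
    have heq : Set.EqOn (fun t => max (m + Real.exp (-b * (t - Tk)) * (c - m)) 0)
        (fun t => m + Real.exp (-b * (t - Tk)) * (c - m)) (Set.uIcc Tk Tk1) := by
      intro t ht
      rw [Set.uIcc_of_le hT.le] at ht
      have h1 : Real.exp (-b * (t - Tk)) ≤ 1 := by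
        rw [Real.exp_le_one_iff]
        nlinarith [ht.1]
      have hE : 0 < Real.exp (-b * (t - Tk)) := Real.exp_pos _
      have h2 := mul_nonneg (sub_nonneg.mpr h1) hm.le
      have h3 := mul_nonneg hE.le hc
      exact max_eq_left (by nlinarith)
    rw [intervalIntegral.integral_congr heq]
    exact integA m b c Tk hb Tk Tk1
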